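/- (Theorem 1) Let n ≥ 1, d = ⌈log₂ n⌉, and let μ be a piecewise stationary source on 𝒳 with temporal partition P ∈ 𝒯_n and segment sources μ^1, μ^2, …. Let ρ be a base source and let g : ℕ → ℝ be non-negative, monotonically non-decreasing, and concave with g(0) = 0. Assume x_{1:n} ∈ 𝒳^n is such that μ(x_{1:n}) > 0, all relevant values of ρ are positive, and for every segment (c,e) with a ≤ c ≤ e ≤ min(b,n) for some (a,b) ∈ P, the conditional redundancy satisfies log₂ μ^{f(a)}(x_{c:e} | x_{a:c−1}) − log₂ ρ(x_{c:e}) ≤ g(e − c + 1), where μ^{f(a)}(x_{c:e} | x_{a:c−1}) := μ^{f(a)}(x_{a:e}) / μ^{f(a)}(x_{a:c−1}) and f(i) is the index of the segment of P containing i. Then there exists a refinement P′ ∈ 𝒞_d of P with Γ_d(P′) ≤ 2·|P|·(⌈log₂ n⌉ + 1) such that log₂ μ(x_{1:n}) − log₂ PTW_d(x_{1:n}) ≤ Γ_d(P′) + |P|·g(⌈ n / (|P|·(⌈log₂ n⌉ + 1)) ⌉)·(⌈log₂ n⌉ + 1). -/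

import Mathlib

/-- The set `𝒞_d(t)` of binary temporal partitions starting at `t`, represented as
finsets of segments `(a,b)` (each segment identified with the interval `{a,…,b}`). -/
def Cpt : ℕ → ℕ → Finset (Finset (ℕ × ℕ))
  | 0, t => {{(t, t)}}
  | d + 1, t =>
      insert {(t, t + 2 ^ (d + 1) - 1)}
        ((Cpt d t ×ˢ Cpt d (t + 2 ^ d)).image fun p => p.1 ∪ p.2)

/-- `Γ_d(P)`: the number of nodes of depth less than `d` in the binary partition tree
associated with `P ∈ 𝒞_d(t)`, defined by the recursion `Γ_0(P) = 0`,
`Γ_{d+1}({(t, t+2^{d+1}-1)}) = 1` and `Γ_{d+1}(S₁ ∪ S₂) = Γ_d(S₁) + Γ_d(S₂) + 1`. -/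
def Gam : ℕ → ℕ → Finset (ℕ × ℕ) → ℕ
  | 0, _, _ => 0
  | d + 1, t, P =>
      if P = {(t, t + 2 ^ (d + 1) - 1)} then 1
      else Gam d t (P.filter fun s => s.2 < t + 2 ^ d)
            + Gam d (t + 2 ^ d) (P.filter fun s => t + 2 ^ d ≤ s.1) + 1

/-- The substring `x_{a:min(b,n)}` of the (1-based) sequence `x` of length `n`,
treated as a standalone string; it is the empty string when `a > min(b,n)`. -/
def seg {𝒳 : Type*} (x : ℕ → 𝒳) (n a b : ℕ) : List 𝒳 :=
  (List.range (min b n + 1 - a)).map fun i => x (a + i)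

/-- `ρ` is a probabilistic data generating source: `ρ(ε) = 1`,
`ρ(x_{1:n}) = ∑_{y ∈ 𝒳} ρ(x_{1:n} y)`, and all values lie in `[0,1]`. -/
def IsSource {𝒳 : Type*} [Fintype 𝒳] (ρ : List 𝒳 → ℝ) : Prop :=
  ρ [] = 1 ∧ (∀ l : List 𝒳, ρ l = ∑ y : 𝒳, ρ (l ++ [y])) ∧
    ∀ l : List 𝒳, ρ l ∈ Set.Icc (0 : ℝ) 1

/-- The Partition Tree Weighting mixture
`PTW_d(x_{1:n}) = ∑_{P ∈ 𝒞_d} 2^{-Γ_d(P)} ∏_{(a,b) ∈ P} ρ(x_{a:b})` (for `n ≤ 2^d`). -/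
noncomputable def PTW {𝒳 : Type*} (ρ : List 𝒳 → ℝ) (d : ℕ) (x : ℕ → 𝒳) (n : ℕ) : ℝ :=
  ∑ P ∈ Cpt d 1, (2 : ℝ) ^ (-(Gam d 1 P : ℤ)) * ∏ s ∈ P, ρ (seg x n s.1 s.2)

/-- `P` is a temporal partition of `{1,…,n}`: a set of pairwise non-overlapping
segments `(a,b)` with `a ≤ b`, whose union is exactly `{1,…,n}`. -/
def IsTPartition (n : ℕ) (P : Finset (ℕ × ℕ)) : Prop :=
  (∀ s ∈ P, s.1 ≤ s.2) ∧
  (∀ s ∈ P, ∀ t ∈ P, s ≠ t → ∀ i, s.1 ≤ i → i ≤ s.2 → ¬(t.1 ≤ i ∧ i ≤ t.2)) ∧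
  (∀ i : ℕ, (1 ≤ i ∧ i ≤ n) ↔ ∃ s ∈ P, s.1 ≤ i ∧ i ≤ s.2)

/-- `C(P)`: the set of change points of `P`, i.e. the left endpoints of its segments
other than `1`. A partition `P'` is a refinement of `P` if `C(P) ⊆ C(P')`. -/
def changePts (P : Finset (ℕ × ℕ)) : Finset ℕ :=
  (P.image Prod.fst).erase 1


/-- The canonical refinement: split a node iff it strictly contains a change point of `C`. -/
def build (C : Finset ℕ) : ℕ → ℕ → Finset (ℕ × ℕ)
  | 0, t => {(t, t)}
  | d + 1, t =>
      if (C.filter fun c => t < c ∧ c < t + 2 ^ (d + 1)).Nonempty then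
        build C d t ∪ build C d (t + 2 ^ d)
      else {(t, t + 2 ^ (d + 1) - 1)}

lemma build_mem (C : Finset ℕ) : ∀ d t, build C d t ∈ Cpt d t := by
  intro d
  induction d with
  | zero => intro t; simp [build, Cpt]
  | succ d ih =>
      intro t
      rw [build, Cpt]
      split
      · exact Finset.mem_insert_of_mem
          (Finset.mem_image.2 ⟨(build C d t, build C d (t + 2 ^ d)),
            Finset.mem_product.2 ⟨ih t, ih (t + 2 ^ d)⟩, rfl⟩)
      · exact Finset.mem_insert_self _ _

/-- S2: bounds on segments of `build`. -/
lemma build_bounds (C : Finset ℕ) : ∀ d t, ∀ s ∈ build C d t,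
    t ≤ s.1 ∧ s.1 ≤ s.2 ∧ s.2 < t + 2 ^ d := by
  intro d
  induction d with
  | zero => intro t s hs; simp [build] at hs; subst hs; simp
  | succ d ih =>
      intro t s hs
      rw [build] at hs
      split at hs
      · rcases Finset.mem_union.1 hs with h | h
        · obtain ⟨h1, h2, h3⟩ := ih t s h
          refine ⟨h1, h2, lt_of_lt_of_le h3 ?_⟩
          have : (2:ℕ) ^ d ≤ 2 ^ (d+1) := Nat.pow_le_pow_right (by norm_num) (by omega)
          omega
        · obtain ⟨h1, h2, h3⟩ := ih (t + 2 ^ d) s h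
          refine ⟨le_trans (by omega) h1, h2, ?_⟩
          have : t + 2 ^ d + 2 ^ d = t + 2 ^ (d+1) := by rw [pow_succ]; ring
          omega
      · simp at hs; subst hs
        have : (1:ℕ) ≤ 2 ^ (d+1) := Nat.one_le_two_pow
        refine ⟨le_refl _, ?_, ?_⟩ <;> omega

/-- S5: `t` is a left endpoint. -/
lemma build_start (C : Finset ℕ) : ∀ d t, ∃ e, (t, e) ∈ build C d t := by
  intro d
  induction d with
  | zero => intro t; exact ⟨t, by simp [build]⟩
  | succ d ih =>
      intro t
      rw [build]; split
      · obtain ⟨e, he⟩ := ih t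
        exact ⟨e, Finset.mem_union_left _ he⟩
      · exact ⟨t + 2 ^ (d+1) - 1, by simp⟩

/-- S6: change points strictly inside the interval are left endpoints. -/
lemma build_changept (C : Finset ℕ) : ∀ d t, ∀ c ∈ C, t < c → c < t + 2 ^ d →
    ∃ e, (c, e) ∈ build C d t := by
  intro d
  induction d with
  | zero => intro t c _ h1 h2; omega
  | succ d ih =>
      intro t c hc h1 h2
      have hsplit : (C.filter fun c => t < c ∧ c < t + 2 ^ (d + 1)).Nonempty :=
        ⟨c, Finset.mem_filter.2 ⟨hc, h1, h2⟩⟩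
      rw [build, if_pos hsplit]
      rcases lt_trichotomy c (t + 2 ^ d) with h | h | h
      · obtain ⟨e, he⟩ := ih t c hc h1 h
        exact ⟨e, Finset.mem_union_left _ he⟩
      · obtain ⟨e, he⟩ := build_start C d (t + 2 ^ d)
        exact ⟨e, by rw [h]; exact Finset.mem_union_right _ he⟩
      · have h2' : c < t + 2 ^ d + 2 ^ d := by
          have : t + 2 ^ d + 2 ^ d = t + 2 ^ (d+1) := by rw [pow_succ]; ring
          omega
        obtain ⟨e, he⟩ := ih (t + 2 ^ d) c hc h h2'
        exact ⟨e, Finset.mem_union_right _ he⟩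

/-- S3: successor of a segment end is a left endpoint (if inside). -/
lemma build_next (C : Finset ℕ) : ∀ d t, ∀ s ∈ build C d t, s.2 + 1 < t + 2 ^ d →
    ∃ e, (s.2 + 1, e) ∈ build C d t := by
  intro d
  induction d with
  | zero => intro t s hs h; simp [build] at hs; subst hs; simp at h
  | succ d ih =>
      intro t s hs h
      have h2 : t + 2 ^ d + 2 ^ d = t + 2 ^ (d+1) := by rw [pow_succ]; ring
      rw [build] at hs ⊢
      split at hs
      · rw [if_pos (by assumption)]
        rcases Finset.mem_union.1 hs with hl | hr
        · rcases lt_or_ge (s.2 + 1) (t + 2 ^ d) with hin | hout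
          · obtain ⟨e, he⟩ := ih t s hl hin
            exact ⟨e, Finset.mem_union_left _ he⟩
          · have hb := build_bounds C d t s hl
            have : s.2 + 1 = t + 2 ^ d := by omega
            obtain ⟨e, he⟩ := build_start C d (t + 2 ^ d)
            exact ⟨e, by rw [this]; exact Finset.mem_union_right _ he⟩
        · obtain ⟨e, he⟩ := ih (t + 2 ^ d) s hr (by omega)
          exact ⟨e, Finset.mem_union_right _ he⟩
      · simp at hs; subst hs
        simp at h
        have : (1:ℕ) ≤ 2 ^ (d+1) := Nat.one_le_two_pow
        omega

/-- S4: segments are determined by any point they contain (disjointness). -/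
lemma build_disj (C : Finset ℕ) : ∀ d t, ∀ s ∈ build C d t, ∀ s' ∈ build C d t,
    s.1 ≤ s'.1 → s'.1 ≤ s.2 → s' = s := by
  intro d
  induction d with
  | zero =>
      intro t s hs s' hs' _ _
      simp [build] at hs hs'; rw [hs, hs']
  | succ d ih =>
      intro t s hs s' hs' h1 h2
      rw [build] at hs hs'
      split at hs
      · rw [if_pos (by assumption)] at hs'
        rcases Finset.mem_union.1 hs with hl | hr <;> rcases Finset.mem_union.1 hs' with hl' | hr'
        · exact ih t s hl s' hl' h1 h2
        · exfalso
          have b1 := build_bounds C d t s hl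
          have b2 := build_bounds C d (t + 2 ^ d) s' hr'
          omega
        · exfalso
          have b1 := build_bounds C d (t + 2 ^ d) s hr
          have b2 := build_bounds C d t s' hl'
          omega
        · exact ih (t + 2 ^ d) s hr s' hr' h1 h2
      · rw [if_neg (by assumption)] at hs'
        simp at hs hs'; rw [hs, hs']


lemma kk (C : Finset ℕ) (d t : ℕ) :
    (C.filter fun c => t < c ∧ c < t + 2 ^ d).card
      + (C.filter fun c => t + 2 ^ d < c ∧ c < t + 2 ^ d + 2 ^ d).card
    ≤ (C.filter fun c => t < c ∧ c < t + 2 ^ (d + 1)).card := by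
  rw [← Finset.card_union_of_disjoint (by
    rw [Finset.disjoint_left]
    intro c hc hc'
    simp [Finset.mem_filter] at hc hc'
    omega)]
  apply Finset.card_le_card
  intro c hc
  have hp : t + 2 ^ d + 2 ^ d = t + 2 ^ (d + 1) := by rw [pow_succ]; ring
  rcases Finset.mem_union.1 hc with h | h <;> rw [Finset.mem_filter] at h ⊢ <;>
    exact ⟨h.1, by omega⟩

lemma gam_split (d t : ℕ) (B₁ B₂ : Finset (ℕ × ℕ))
    (h1 : ∀ s ∈ B₁, t ≤ s.1 ∧ s.1 ≤ s.2 ∧ s.2 < t + 2 ^ d)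
    (h2 : ∀ s ∈ B₂, t + 2 ^ d ≤ s.1 ∧ s.1 ≤ s.2 ∧ s.2 < t + 2 ^ d + 2 ^ d)
    (hne : ∃ e, (t, e) ∈ B₁) :
    Gam (d + 1) t (B₁ ∪ B₂) = Gam d t B₁ + Gam d (t + 2 ^ d) B₂ + 1 := by
  obtain ⟨e, he⟩ := hne
  have h2d : (1:ℕ) ≤ 2 ^ d := Nat.one_le_two_pow
  rw [Gam, if_neg, Finset.filter_union, Finset.filter_union]
  · rw [Finset.filter_true_of_mem (fun s hs => (h1 s hs).2.2),
      Finset.filter_false_of_mem (fun s hs => by have := h2 s hs; omega),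
      Finset.filter_false_of_mem (fun s hs => by have := h1 s hs; omega),
      Finset.filter_true_of_mem (fun s hs => (h2 s hs).1),
      Finset.union_empty, Finset.empty_union]
  · intro heq
    have : (t, e) ∈ ({(t, t + 2 ^ (d+1) - 1)} : Finset (ℕ × ℕ)) := by
      rw [← heq]; exact Finset.mem_union_left _ he
    simp at this
    have := (h1 _ he).2.2
    have hp : t + 2 ^ d + 2 ^ d = t + 2 ^ (d + 1) := by rw [pow_succ]; ring
    omega

lemma build_gam (C : Finset ℕ) : ∀ d t,
    Gam d t (build C d t) ≤ 2 * (C.filter fun c => t < c ∧ c < t + 2 ^ d).card * (d + 1) + 1 := by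
  intro d
  induction d with
  | zero => intro t; simp [Gam]
  | succ d ih =>
      intro t
      rw [build]
      split
      · rename_i hsplit
        rw [gam_split d t _ _ (build_bounds C d t) (build_bounds C d (t + 2 ^ d))
          (build_start C d t)]
        have hL := ih t
        have hR := ih (t + 2 ^ d)
        have hkk := kk C d t
        have hk1 : 1 ≤ (C.filter fun c => t < c ∧ c < t + 2 ^ (d + 1)).card :=
          Finset.card_pos.2 hsplit
        nlinarith [hL, hR, hkk, hk1]
      · rw [Gam, if_pos rfl]
        nlinarith [Nat.zero_le ((C.filter fun c => t < c ∧ c < t + 2 ^ (d + 1)).card * (d + 2))]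

lemma build_card (C : Finset ℕ) : ∀ d t,
    (build C d t).card ≤ (C.filter fun c => t < c ∧ c < t + 2 ^ d).card * (d + 1) + 1 := by
  intro d
  induction d with
  | zero => intro t; simp [build]
  | succ d ih =>
      intro t
      rw [build]
      split
      · rename_i hsplit
        have hL := ih t
        have hR := ih (t + 2 ^ d)
        have hkk := kk C d t
        have hk1 : 1 ≤ (C.filter fun c => t < c ∧ c < t + 2 ^ (d + 1)).card :=
          Finset.card_pos.2 hsplit
        calc (build C d t ∪ build C d (t + 2 ^ d)).card
            ≤ (build C d t).card + (build C d (t + 2 ^ d)).card := Finset.card_union_le _ _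
          _ ≤ _ := by nlinarith
      · simp


lemma seg_eq_nil {𝒳 : Type*} (x : ℕ → 𝒳) (n : ℕ) {a b : ℕ} (h : min b n + 1 ≤ a) :
    seg x n a b = [] := by
  unfold seg
  rw [Nat.sub_eq_zero_of_le h]
  simp

lemma seg_congr {𝒳 : Type*} (x : ℕ → 𝒳) (n : ℕ) {a b b' : ℕ} (h : min b n = min b' n) :
    seg x n a b = seg x n a b' := by
  unfold seg; rw [h]

lemma seg_succ {𝒳 : Type*} (x : ℕ → 𝒳) (n : ℕ) {a j : ℕ} (ha : a ≤ j + 1) (hj : j + 1 ≤ n) :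
    seg x n a (j + 1) = seg x n a j ++ [x (j + 1)] := by
  unfold seg
  rw [min_eq_left hj, min_eq_left (by omega : j ≤ n)]
  have h1 : j + 1 + 1 - a = (j + 1 - a) + 1 := by omega
  have h2 : a + (j + 1 - a) = j + 1 := by omega
  rw [h1, List.range_succ, List.map_append]
  simp only [List.map_cons, List.map_nil, h2]

lemma source_append_le {𝒳 : Type*} [Fintype 𝒳] {μ : List 𝒳 → ℝ} (hμ : IsSource μ)
    (l : List 𝒳) (y : 𝒳) : μ (l ++ [y]) ≤ μ l := by
  rw [hμ.2.1 l]
  exact Finset.single_le_sum (fun z _ => (hμ.2.2 (l ++ [z])).1) (Finset.mem_univ y)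

lemma source_seg_mono {𝒳 : Type*} [Fintype 𝒳] {μ : List 𝒳 → ℝ} (hμ : IsSource μ)
    (x : ℕ → 𝒳) {n a j b : ℕ} (hjb : j ≤ b) (hbn : b ≤ n) :
    μ (seg x n a b) ≤ μ (seg x n a j) := by
  induction b with
  | zero => rw [Nat.le_zero.mp hjb]
  | succ b ih =>
      rcases Nat.eq_or_lt_of_le hjb with h | h
      · subst h; exact le_refl _
      · have hb : j ≤ b := by omega
        refine le_trans ?_ (ih hb (by omega))
        rcases le_or_gt a (b + 1) with ha | ha
        · rw [seg_succ x n ha hbn]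
          exact source_append_le hμ _ _
        · rw [seg_eq_nil x n (by omega : min (b+1) n + 1 ≤ a),
            seg_eq_nil x n (by omega : min b n + 1 ≤ a)]

lemma source_seg_pos {𝒳 : Type*} [Fintype 𝒳] {μ : List 𝒳 → ℝ} (hμ : IsSource μ)
    (x : ℕ → 𝒳) {n a j b : ℕ} (hjb : j ≤ b) (hbn : b ≤ n)
    (hpos : 0 < μ (seg x n a b)) : 0 < μ (seg x n a j) :=
  lt_of_lt_of_le hpos (source_seg_mono hμ x hjb hbn)


open Real in
lemma telescope {𝒳 : Type*} [Fintype 𝒳] (x : ℕ → 𝒳) (n : ℕ) (B : Finset (ℕ × ℕ))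
    (hB1 : ∀ s ∈ B, s.1 ≤ s.2)
    (hBdisj : ∀ s ∈ B, ∀ s' ∈ B, s.1 ≤ s'.1 → s'.1 ≤ s.2 → s' = s)
    (hBnext : ∀ s ∈ B, s.2 + 1 ≤ n → ∃ e, (s.2 + 1, e) ∈ B)
    (μp : List 𝒳 → ℝ) (hμp : IsSource μp) (ρ : List 𝒳 → ℝ)
    (a b : ℕ) (hab : a ≤ b) (hbn : b ≤ n) (hμpos : 0 < μp (seg x n a b))
    (hcross : ∀ s ∈ B, s.1 ≤ b → min s.2 n ≤ b)
    (g : ℝ → ℝ)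
    (hred' : ∀ c e : ℕ, a ≤ c → c ≤ e → e ≤ b →
      Real.logb 2 (μp (seg x n a e) / μp (seg x n a (c - 1)))
          - Real.logb 2 (ρ (seg x n c e)) ≤ g ((e : ℝ) - c + 1)) :
    ∀ m c : ℕ, b + 1 - c ≤ m → a ≤ c → (b < c ∨ ∃ e, (c, e) ∈ B) →
      Real.logb 2 (μp (seg x n a b)) - Real.logb 2 (μp (seg x n a (min (c - 1) b)))
        ≤ ∑ s ∈ B.filter (fun s => c ≤ s.1 ∧ s.1 ≤ b),
            (Real.logb 2 (ρ (seg x n s.1 s.2)) + g ((min s.2 n + 1 - s.1 : ℕ) : ℝ)) := by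
  intro m
  induction m with
  | zero =>
      intro c hm hac _
      have hbc : b < c := by omega
      have h1 : min (c - 1) b = b := by omega
      have h2 : B.filter (fun s => c ≤ s.1 ∧ s.1 ≤ b) = ∅ :=
        Finset.filter_eq_empty_iff.2 (fun s _ h => by omega)
      rw [h1, h2, Finset.sum_empty, sub_self]
  | succ m ih =>
      intro c hm hac hcase
      rcases hcase with hbc | ⟨e, he⟩
      · have h1 : min (c - 1) b = b := by omega
        have h2 : B.filter (fun s => c ≤ s.1 ∧ s.1 ≤ b) = ∅ :=
          Finset.filter_eq_empty_iff.2 (fun s _ h => by omega)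
        rw [h1, h2, Finset.sum_empty, sub_self]
      rcases lt_or_ge b c with hbc | hcb
      · have h1 : min (c - 1) b = b := by omega
        have h2 : B.filter (fun s => c ≤ s.1 ∧ s.1 ≤ b) = ∅ :=
          Finset.filter_eq_empty_iff.2 (fun s _ h => by omega)
        rw [h1, h2, Finset.sum_empty, sub_self]
      -- main case : c ≤ b and (c, e) ∈ B
      have hce : c ≤ e := hB1 _ he
      have hemin : min e n ≤ b := hcross _ he hcb
      have heb : min e b = min e n := by omega
      -- the next starting point
      have hnext : b < e + 1 ∨ ∃ e', (e + 1, e') ∈ B := by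
        rcases le_or_gt (e + 1) b with h | h
        · exact Or.inr (hBnext _ he (by omega))
        · exact Or.inl h
      have ihe := ih (e + 1) (by omega) (by omega) hnext
      have hmineb : min (e + 1 - 1) b = min e b := by omega
      rw [hmineb] at ihe
      -- filter decomposition
      have hfilter : B.filter (fun s => c ≤ s.1 ∧ s.1 ≤ b)
          = insert (c, e) (B.filter (fun s => e + 1 ≤ s.1 ∧ s.1 ≤ b)) := by
        ext s
        simp only [Finset.mem_filter, Finset.mem_insert]
        constructor
        · rintro ⟨hs, hcs, hsb⟩
          rcases le_or_gt s.1 e with h | h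
          · exact Or.inl (hBdisj _ he _ hs hcs h)
          · exact Or.inr ⟨hs, by omega, hsb⟩
        · rintro (rfl | ⟨hs, h1, h2⟩)
          · exact ⟨he, le_refl _, hcb⟩
          · exact ⟨hs, by omega, h2⟩
      have hnotmem : (c, e) ∉ B.filter (fun s => e + 1 ≤ s.1 ∧ s.1 ≤ b) := by
        simp only [Finset.mem_filter]; rintro ⟨_, h, _⟩; omega
      rw [hfilter, Finset.sum_insert hnotmem]
      -- positivity of prefixes
      have hpos1 : 0 < μp (seg x n a (min e b)) :=
        source_seg_pos hμp x (by omega) hbn hμpos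
      have hpos2 : 0 < μp (seg x n a (c - 1)) :=
        source_seg_pos hμp x (by omega) hbn hμpos
      -- redundancy bound on segment (c, min e b)
      have hr := hred' c (min e b) hac (by omega) (by omega)
      rw [Real.logb_div (ne_of_gt hpos1) (ne_of_gt hpos2)] at hr
      have hsegeq : seg x n c (min e b) = seg x n c e :=
        seg_congr x n (by omega)
      rw [hsegeq] at hr
      -- the g-argument coincides
      have hgarg : ((min e b : ℕ) : ℝ) - c + 1 = ((min e n + 1 - c : ℕ) : ℝ) := by
        rw [heb]
        push_cast [Nat.cast_sub (show c ≤ min e n + 1 by omega)]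
        ring
      rw [hgarg] at hr
      have hmincb : min (c - 1) b = c - 1 := by omega
      rw [hmincb]
      dsimp only
      linarith


lemma nat_ceil_div (N m : ℕ) (hm : 0 < m) : N ≤ m * ((N + m - 1) / m) := by
  have h1 : m * ((N + m - 1) / m) + (N + m - 1) % m = N + m - 1 := Nat.div_add_mod _ _
  have h2 : (N + m - 1) % m < m := Nat.mod_lt _ hm
  revert h1
  generalize m * ((N + m - 1) / m) = K
  intro h1
  omega

lemma jensen_sum {ι : Type*} (g : ℝ → ℝ)
    (hg0 : g 0 = 0)
    (hgnonneg : ∀ y ∈ Set.Ici (0 : ℝ), 0 ≤ g y)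
    (hgmono : MonotoneOn g (Set.Ici (0 : ℝ)))
    (hgconc : ConcaveOn ℝ (Set.Ici (0 : ℝ)) g)
    (B : Finset ι) (len : ι → ℕ) (N m : ℕ) (hm : 0 < m) (hcard : B.card ≤ m)
    (hsum : ∑ s ∈ B, len s ≤ N) :
    ∑ s ∈ B, g (len s) ≤ (m : ℝ) * g (((N + m - 1) / m : ℕ) : ℝ) := by
  have hm0 : (0:ℝ) < (m:ℝ) := by exact_mod_cast hm
  have hQ : (N : ℝ) / (m:ℝ) ≤ (((N + m - 1) / m : ℕ) : ℝ) := by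
    rw [div_le_iff₀ hm0]
    have h := nat_ceil_div N m hm
    calc (N:ℝ) ≤ ((m * ((N + m - 1) / m) : ℕ) : ℝ) := by exact_mod_cast h
      _ = _ := by push_cast; ring
  have hQ0 : (0:ℝ) ≤ (((N + m - 1) / m : ℕ) : ℝ) := by positivity
  rcases B.eq_empty_or_nonempty with rfl | hBne
  · simp only [Finset.sum_empty]
    exact mul_nonneg (le_of_lt hm0) (hgnonneg _ hQ0)
  have hk : (0:ℝ) < (B.card : ℝ) := by exact_mod_cast Finset.card_pos.2 hBne
  -- Jensen with uniform weights
  have hjen := hgconc.le_map_sum (t := B) (w := fun _ => ((B.card : ℝ))⁻¹)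
    (p := fun s => (len s : ℝ))
    (fun i _ => by positivity)
    (by rw [Finset.sum_const, nsmul_eq_mul, mul_inv_cancel₀ (ne_of_gt hk)])
    (fun i _ => Set.mem_Ici.2 (by positivity))
  simp only [smul_eq_mul] at hjen
  rw [← Finset.mul_sum, ← Finset.mul_sum] at hjen
  set S : ℝ := ∑ i ∈ B, (len i : ℝ) with hSdef
  have hS0 : 0 ≤ S := Finset.sum_nonneg fun i _ => by positivity
  have hsum1 : ∑ i ∈ B, g ((len i : ℝ)) ≤ (B.card : ℝ) * g ((B.card : ℝ)⁻¹ * S) := by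
    calc ∑ i ∈ B, g ((len i : ℝ))
        = (B.card : ℝ) * ((B.card : ℝ)⁻¹ * ∑ i ∈ B, g ((len i : ℝ))) := by
          field_simp
      _ ≤ (B.card : ℝ) * g ((B.card : ℝ)⁻¹ * S) :=
          mul_le_mul_of_nonneg_left hjen (le_of_lt hk)
  have ha : (0:ℝ) ≤ (B.card:ℝ) / (m:ℝ) := by positivity
  have hkm : (B.card:ℝ) ≤ (m:ℝ) := by exact_mod_cast hcard
  have hb : (0:ℝ) ≤ 1 - (B.card:ℝ) / (m:ℝ) := by
    rw [sub_nonneg, div_le_one hm0]; exact hkm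
  have hconc := hgconc.2 (Set.mem_Ici.2 (show (0:ℝ) ≤ (B.card : ℝ)⁻¹ * S by positivity))
    (Set.mem_Ici.2 (le_refl (0:ℝ))) ha hb (by ring)
  have heq : ((B.card:ℝ) / (m:ℝ)) • ((B.card : ℝ)⁻¹ * S) + (1 - (B.card:ℝ) / (m:ℝ)) • (0:ℝ)
      = S / (m:ℝ) := by
    rw [smul_eq_mul, smul_eq_mul, mul_zero, add_zero, div_mul_eq_mul_div, ← mul_assoc,
      mul_inv_cancel₀ hk.ne', one_mul]
  rw [heq, hg0, smul_eq_mul, smul_eq_mul, mul_zero, add_zero] at hconc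
  have htwo : (B.card : ℝ) * g ((B.card : ℝ)⁻¹ * S) ≤ (m:ℝ) * g (S / (m:ℝ)) := by
    have h1 : (m:ℝ) * ((B.card:ℝ) / (m:ℝ) * g ((B.card : ℝ)⁻¹ * S)) ≤ (m:ℝ) * g (S / (m:ℝ)) :=
      mul_le_mul_of_nonneg_left hconc (le_of_lt hm0)
    calc (B.card : ℝ) * g ((B.card : ℝ)⁻¹ * S)
        = (m:ℝ) * ((B.card:ℝ) / (m:ℝ) * g ((B.card : ℝ)⁻¹ * S)) := by field_simp
      _ ≤ _ := h1
  have hmono : g (S / (m:ℝ)) ≤ g (((N + m - 1) / m : ℕ) : ℝ) := by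
    apply hgmono (Set.mem_Ici.2 (by positivity)) (Set.mem_Ici.2 hQ0)
    have hSN : S ≤ (N : ℝ) := by
      rw [hSdef]
      calc ∑ i ∈ B, ((len i : ℕ) : ℝ) = ((∑ i ∈ B, len i : ℕ) : ℝ) := by push_cast; ring
        _ ≤ (N:ℝ) := by exact_mod_cast hsum
    calc S / (m:ℝ) ≤ (N : ℝ) / (m:ℝ) := by gcongr
      _ ≤ _ := hQ
  calc ∑ i ∈ B, g ((len i : ℝ)) ≤ (B.card : ℝ) * g ((B.card : ℝ)⁻¹ * S) := hsum1
    _ ≤ (m:ℝ) * g (S / (m:ℝ)) := htwo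
    _ ≤ _ := mul_le_mul_of_nonneg_left hmono (le_of_lt hm0)



lemma lensum (B : Finset (ℕ × ℕ)) (n : ℕ)
    (h1 : ∀ s ∈ B, 1 ≤ s.1)
    (hdisj : ∀ s ∈ B, ∀ s' ∈ B, s.1 ≤ s'.1 → s'.1 ≤ s.2 → s' = s) :
    ∑ s ∈ B, (min s.2 n + 1 - s.1) ≤ n := by
  have hc : ∀ s ∈ B, min s.2 n + 1 - s.1 = (Finset.Icc s.1 (min s.2 n)).card :=
    fun s _ => (Nat.card_Icc _ _).symm
  rw [Finset.sum_congr rfl hc]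
  have hpd : ∀ s ∈ B, ∀ t ∈ B, s ≠ t →
      Disjoint (Finset.Icc s.1 (min s.2 n)) (Finset.Icc t.1 (min t.2 n)) := by
    intro s hs t ht hst
    rw [Finset.disjoint_left]
    intro i hi hi'
    rw [Finset.mem_Icc] at hi hi'
    rcases le_total s.1 t.1 with h | h
    · exact hst ((hdisj s hs t ht h (by omega)).symm)
    · exact hst (hdisj t ht s hs h (by omega))
  rw [← Finset.card_biUnion hpd]
  calc (B.biUnion fun s => Finset.Icc s.1 (min s.2 n)).card
      ≤ (Finset.Icc 1 n).card := by
        apply Finset.card_le_card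
        intro i hi
        rw [Finset.mem_biUnion] at hi
        obtain ⟨s, hs, hi⟩ := hi
        rw [Finset.mem_Icc] at hi ⊢
        have := h1 s hs
        omega
    _ = n := by rw [Nat.card_Icc]; omega


/-- **Theorem 1.** Let `n ≥ 1`, `d = ⌈log₂ n⌉`, and let `μ` be a
piecewise stationary source with temporal partition `P ∈ 𝒯_n`, where segment
`(a,b) ∈ P` generates data according to the source `μseg (a,b)`
(so `μ(x_{1:n}) = ∏_{(a,b) ∈ P} μ^{f(a)}(x_{a:b})`).  Let `ρ` be a base source and
`g : ℝ → ℝ` be non-negative, monotonically non-decreasing and concave on `[0,∞)`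
with `g(0) = 0`.  Assume `μ(x_{1:n}) > 0`, all relevant values of `ρ` are positive,
and for every sub-segment `(c,e)` with `a ≤ c ≤ e ≤ min(b,n)` of a segment
`(a,b) ∈ P` the conditional redundancy satisfies
`log₂ μ^{f(a)}(x_{c:e} | x_{a:c-1}) - log₂ ρ(x_{c:e}) ≤ g(e - c + 1)`, where
`μ^{f(a)}(x_{c:e} | x_{a:c-1}) = μ^{f(a)}(x_{a:e}) / μ^{f(a)}(x_{a:c-1})`.
Then there exists a refinement `P' ∈ 𝒞_d` of `P` with
`Γ_d(P') ≤ 2·|P|·(⌈log₂ n⌉ + 1)` such that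
`log₂ μ(x_{1:n}) - log₂ PTW_d(x_{1:n}) ≤
  Γ_d(P') + |P|·g(⌈n / (|P|·(⌈log₂ n⌉ + 1))⌉)·(⌈log₂ n⌉ + 1)`. -/
theorem ptw_redundancy {𝒳 : Type*} [Fintype 𝒳] [Nonempty 𝒳]
    (n : ℕ) (hn : 1 ≤ n) (x : ℕ → 𝒳)
    (P : Finset (ℕ × ℕ)) (hP : IsTPartition n P)
    (μseg : ℕ × ℕ → List 𝒳 → ℝ) (hμ : ∀ s ∈ P, IsSource (μseg s))
    (hμpos : 0 < ∏ s ∈ P, μseg s (seg x n s.1 s.2))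
    (ρ : List 𝒳 → ℝ) (hρ : IsSource ρ)
    (hρpos : ∀ a b : ℕ, 0 < ρ (seg x n a b))
    (g : ℝ → ℝ)
    (hg0 : g 0 = 0)
    (hgnonneg : ∀ y ∈ Set.Ici (0 : ℝ), 0 ≤ g y)
    (hgmono : MonotoneOn g (Set.Ici (0 : ℝ)))
    (hgconc : ConcaveOn ℝ (Set.Ici (0 : ℝ)) g)
    (hred : ∀ a b c e : ℕ, (a, b) ∈ P → a ≤ c → c ≤ e → e ≤ min b n →
      Real.logb 2 (μseg (a, b) (seg x n a e) / μseg (a, b) (seg x n a (c - 1)))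
          - Real.logb 2 (ρ (seg x n c e))
        ≤ g ((e : ℝ) - c + 1)) :
    ∃ P' ∈ Cpt (Nat.clog 2 n) 1,
      changePts P ⊆ changePts P' ∧
      Gam (Nat.clog 2 n) 1 P' ≤ 2 * P.card * (Nat.clog 2 n + 1) ∧
      Real.logb 2 (∏ s ∈ P, μseg s (seg x n s.1 s.2))
          - Real.logb 2 (PTW ρ (Nat.clog 2 n) x n)
        ≤ (Gam (Nat.clog 2 n) 1 P' : ℝ)
            + (P.card : ℝ)
              * g (((n + P.card * (Nat.clog 2 n + 1) - 1)
                      / (P.card * (Nat.clog 2 n + 1)) : ℕ) : ℝ)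
              * (Nat.clog 2 n + 1) := by

  classical
  set d := Nat.clog 2 n with hd
  set C := changePts P with hC
  set B := build C d 1 with hB
  have hn2 : n ≤ 2 ^ d := Nat.le_pow_clog one_lt_two n
  have hPend : ∀ p ∈ P, 1 ≤ p.1 ∧ p.1 ≤ p.2 ∧ p.2 ≤ n := by
    intro p hp
    have h1 := (hP.2.2 p.1).2 ⟨p, hp, le_rfl, hP.1 p hp⟩
    have h2 := (hP.2.2 p.2).2 ⟨p, hp, hP.1 p hp, le_rfl⟩
    exact ⟨h1.1, hP.1 p hp, h2.2⟩
  have huniq : ∀ p ∈ P, ∀ q ∈ P, ∀ i : ℕ, p.1 ≤ i → i ≤ p.2 → q.1 ≤ i → i ≤ q.2 → p = q := by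
    intro p hp q hq i h1 h2 h3 h4
    by_contra hne
    exact hP.2.1 p hp q hq hne i h1 h2 ⟨h3, h4⟩
  have hBmem : B ∈ Cpt d 1 := build_mem C d 1
  have hBb := build_bounds C d 1
  have hB1 : ∀ s ∈ B, s.1 ≤ s.2 := fun s hs => (hBb s hs).2.1
  have hBdisj := build_disj C d 1
  have hBnext : ∀ s ∈ B, s.2 + 1 ≤ n → ∃ e, (s.2 + 1, e) ∈ B := by
    intro s hs h
    exact build_next C d 1 s hs (by omega)
  have hPne : P.Nonempty := by
    obtain ⟨s, hs, -, -⟩ := (hP.2.2 1).1 ⟨le_rfl, hn⟩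
    exact ⟨s, hs⟩
  have hPc : 0 < P.card := Finset.card_pos.2 hPne
  have h1img : (1 : ℕ) ∈ P.image Prod.fst := by
    obtain ⟨s, hs, hs1, -⟩ := (hP.2.2 1).1 ⟨le_rfl, hn⟩
    have := (hPend s hs).1
    exact Finset.mem_image.2 ⟨s, hs, le_antisymm hs1 this⟩
  have hstart : ∀ p ∈ P, ∃ e, (p.1, e) ∈ B := by
    intro p hp
    rcases eq_or_ne p.1 1 with h | h
    · obtain ⟨e, he⟩ := build_start C d 1
      exact ⟨e, h ▸ he⟩
    · apply build_changept C d 1 p.1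
      · exact Finset.mem_erase.2 ⟨h, Finset.mem_image.2 ⟨p, hp, rfl⟩⟩
      · have := (hPend p hp).1; omega
      · have h2 := (hPend p hp).2; omega
  have hsub : changePts P ⊆ changePts B := by
    intro c hc
    obtain ⟨hc1, hcimg⟩ := Finset.mem_erase.1 hc
    obtain ⟨p, hp, rfl⟩ := Finset.mem_image.1 hcimg
    obtain ⟨e, he⟩ := hstart p hp
    exact Finset.mem_erase.2 ⟨hc1, Finset.mem_image.2 ⟨(p.1, e), he, rfl⟩⟩
  have hfac : ∀ p ∈ P, 0 < μseg p (seg x n p.1 p.2) := by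
    intro p hp
    rcases lt_or_eq_of_le ((hμ p hp).2.2 _).1 with h | h
    · exact h
    · exfalso
      rw [Finset.prod_eq_zero hp h.symm] at hμpos
      exact lt_irrefl _ hμpos
  have hcross : ∀ p ∈ P, ∀ s ∈ B, s.1 ≤ p.2 → min s.2 n ≤ p.2 := by
    intro p hp s hs hsp
    by_contra hlt
    push_neg at hlt
    have hp2n : p.2 < n := by omega
    obtain ⟨q, hq, hq1, hq2⟩ := (hP.2.2 (p.2 + 1)).1 ⟨by omega, by omega⟩
    have hq1' : q.1 = p.2 + 1 := by
      by_contra hne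
      have hq1b : q.1 ≤ p.2 := by omega
      have hqp : q ≠ p := fun h => by rw [h] at hq2; omega
      exact hP.2.1 q hq p hp hqp p.2 hq1b (by omega) ⟨(hPend p hp).2.1, le_rfl⟩
    have hcp : p.2 + 1 ∈ C := by
      rw [hC]
      refine Finset.mem_erase.2 ⟨by have := hPend p hp; omega, ?_⟩
      exact Finset.mem_image.2 ⟨q, hq, hq1'⟩
    obtain ⟨e'', he''⟩ := build_changept C d 1 (p.2 + 1) hcp
      (by have := hPend p hp; omega) (by omega)
    have heq := hBdisj s hs (p.2 + 1, e'') he'' (by omega) (by omega)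
    rw [← heq] at hsp
    simp only at hsp
    omega
  set F : ℕ × ℕ → ℝ := fun s =>
    Real.logb 2 (ρ (seg x n s.1 s.2)) + g ((min s.2 n + 1 - s.1 : ℕ) : ℝ) with hF
  have hper : ∀ p ∈ P, Real.logb 2 (μseg p (seg x n p.1 p.2))
      ≤ ∑ s ∈ B.filter (fun s => p.1 ≤ s.1 ∧ s.1 ≤ p.2), F s := by
    intro p hp
    obtain ⟨h1p, h12, h2n⟩ := hPend p hp
    have hred' : ∀ c e : ℕ, p.1 ≤ c → c ≤ e → e ≤ p.2 →
        Real.logb 2 (μseg p (seg x n p.1 e) / μseg p (seg x n p.1 (c - 1)))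
          - Real.logb 2 (ρ (seg x n c e)) ≤ g ((e : ℝ) - c + 1) := by
      intro c e h1 h2 h3
      have hp' : (p.1, p.2) ∈ P := by rwa [Prod.mk.eta]
      exact hred p.1 p.2 c e hp' h1 h2 (by omega)
    have htel := telescope x n B hB1 hBdisj hBnext (μseg p) (hμ p hp) ρ p.1 p.2 h12 h2n
      (hfac p hp) (hcross p hp) g hred' (p.2 + 1 - p.1) p.1 le_rfl le_rfl
      (Or.inr (hstart p hp))
    have hmin : min (p.1 - 1) p.2 = p.1 - 1 := by omega
    rw [hmin] at htel
    have hnil : seg x n p.1 (p.1 - 1) = [] := seg_eq_nil x n (by omega)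
    rw [hnil, (hμ p hp).1, Real.logb_one, sub_zero] at htel
    exact htel
  have hMeq : Real.logb 2 (∏ p ∈ P, μseg p (seg x n p.1 p.2))
      = ∑ p ∈ P, Real.logb 2 (μseg p (seg x n p.1 p.2)) :=
    Real.logb_prod P _ (fun p hp => ne_of_gt (hfac p hp))
  have hRpos : 0 < ∏ s ∈ B, ρ (seg x n s.1 s.2) :=
    Finset.prod_pos fun s _ => hρpos s.1 s.2
  have hReq : Real.logb 2 (∏ s ∈ B, ρ (seg x n s.1 s.2))
      = ∑ s ∈ B, Real.logb 2 (ρ (seg x n s.1 s.2)) :=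
    Real.logb_prod B _ (fun s _ => ne_of_gt (hρpos s.1 s.2))
  have hcover : B.filter (fun s => s.1 ≤ n)
      = P.biUnion (fun p => B.filter (fun s => p.1 ≤ s.1 ∧ s.1 ≤ p.2)) := by
    ext s
    simp only [Finset.mem_filter, Finset.mem_biUnion]
    constructor
    · rintro ⟨hs, hsn⟩
      obtain ⟨p, hp, h1, h2⟩ := (hP.2.2 s.1).1 ⟨(hBb s hs).1, hsn⟩
      exact ⟨p, hp, hs, h1, h2⟩
    · rintro ⟨p, hp, hs, h1, h2⟩
      exact ⟨hs, h2.trans (hPend p hp).2.2⟩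
  have hdisjfib : (↑P : Set (ℕ × ℕ)).PairwiseDisjoint
      (fun p => B.filter (fun s => p.1 ≤ s.1 ∧ s.1 ≤ p.2)) := by
    intro p hp q hq hne
    refine Finset.disjoint_left.2 ?_
    intro s hsp hsq
    rw [Finset.mem_filter] at hsp hsq
    exact hne (huniq p hp q hq s.1 hsp.2.1 hsp.2.2 hsq.2.1 hsq.2.2)
  have hzero : ∑ s ∈ B.filter (fun s => ¬ s.1 ≤ n), F s = 0 := by
    apply Finset.sum_eq_zero
    intro s hs
    rw [Finset.mem_filter] at hs
    have hsn : n < s.1 := by omega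
    have hlen : min s.2 n + 1 - s.1 = 0 := by omega
    have hnil : seg x n s.1 s.2 = [] := seg_eq_nil x n (by omega)
    rw [hF]
    simp only
    rw [hnil, hρ.1, hlen, Real.logb_one]
    norm_num [hg0]
  have hsplit : ∑ p ∈ P, ∑ s ∈ B.filter (fun s => p.1 ≤ s.1 ∧ s.1 ≤ p.2), F s
      = ∑ s ∈ B, F s := by
    rw [← Finset.sum_biUnion hdisjfib, ← hcover,
      ← Finset.sum_filter_add_sum_filter_not B (fun s => s.1 ≤ n) F, hzero, add_zero]
  have hwnonneg : ∀ Q ∈ Cpt d 1,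
      0 ≤ (2:ℝ) ^ (-(Gam d 1 Q : ℤ)) * ∏ s ∈ Q, ρ (seg x n s.1 s.2) := by
    intro Q hQ
    exact mul_nonneg (by positivity) (Finset.prod_nonneg fun s _ => (hρ.2.2 _).1)
  have hle : (2:ℝ) ^ (-(Gam d 1 B : ℤ)) * ∏ s ∈ B, ρ (seg x n s.1 s.2) ≤ PTW ρ d x n :=
    Finset.single_le_sum hwnonneg hBmem
  have hPTWpos : 0 < PTW ρ d x n := lt_of_lt_of_le (by positivity) hle
  have hlogPTW : -(Gam d 1 B : ℝ) + Real.logb 2 (∏ s ∈ B, ρ (seg x n s.1 s.2))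
      ≤ Real.logb 2 (PTW ρ d x n) := by
    have h1 : Real.logb 2 ((2:ℝ) ^ (-(Gam d 1 B : ℤ)) * ∏ s ∈ B, ρ (seg x n s.1 s.2))
        = -(Gam d 1 B : ℝ) + Real.logb 2 (∏ s ∈ B, ρ (seg x n s.1 s.2)) := by
      rw [Real.logb_mul (by positivity) (ne_of_gt hRpos)]
      congr 1
      rw [Real.logb, Real.log_zpow, mul_div_assoc,
        div_self (ne_of_gt (Real.log_pos one_lt_two)), mul_one]
      push_cast
      ring
    rw [← h1]
    exact Real.logb_le_logb_of_le one_lt_two (by positivity) hle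
  set kk := (C.filter fun c => 1 < c ∧ c < 1 + 2 ^ d).card with hkk
  have hkP : kk + 1 ≤ P.card := by
    have h1 : kk ≤ C.card := Finset.card_le_card (Finset.filter_subset _ _)
    have h2 : C.card = (P.image Prod.fst).card - 1 := by
      rw [hC, changePts, Finset.card_erase_of_mem h1img]
    have h3 : (P.image Prod.fst).card ≤ P.card := Finset.card_image_le
    have h4 : 0 < (P.image Prod.fst).card := Finset.card_pos.2 ⟨1, h1img⟩
    omega
  have hGamB : Gam d 1 B ≤ 2 * P.card * (d + 1) := by
    have h := build_gam C d 1
    nlinarith [h, hkP]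
  have hcard : B.card ≤ P.card * (d + 1) := by
    have h := build_card C d 1
    nlinarith [h, hkP]
  have hm : 0 < P.card * (d + 1) := Nat.mul_pos hPc (by omega)
  have hlensum : ∑ s ∈ B, (min s.2 n + 1 - s.1) ≤ n :=
    lensum B n (fun s hs => (hBb s hs).1) hBdisj
  have hjen := jensen_sum g hg0 hgnonneg hgmono hgconc B (fun s => min s.2 n + 1 - s.1)
    n (P.card * (d + 1)) hm hcard hlensum
  refine ⟨B, hBmem, hsub, hGamB, ?_⟩
  have hsum1 : ∑ p ∈ P, Real.logb 2 (μseg p (seg x n p.1 p.2))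
      ≤ ∑ s ∈ B, F s := by
    rw [← hsplit]
    exact Finset.sum_le_sum hper
  have hFsplit : ∑ s ∈ B, F s
      = (∑ s ∈ B, Real.logb 2 (ρ (seg x n s.1 s.2)))
        + ∑ s ∈ B, g ((min s.2 n + 1 - s.1 : ℕ) : ℝ) := by
    rw [← Finset.sum_add_distrib]
  have hrhs : ((P.card * (d + 1) : ℕ) : ℝ)
        * g (((n + P.card * (d + 1) - 1) / (P.card * (d + 1)) : ℕ) : ℝ)
      = (P.card : ℝ)
        * g (((n + P.card * (d + 1) - 1) / (P.card * (d + 1)) : ℕ) : ℝ)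
        * ((d : ℝ) + 1) := by
    push_cast
    ring
  rw [hMeq]
  linarith [hsum1, hFsplit, hjen, hlogPTW, hReq, hrhs]
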